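/- Let κ ∈ ℂ and M ∈ ℂ^{n×n}, and let M_κ be the ℝ-linear operator on ℂ^n given by M_κ z = κ z + M z̄. If λ belongs to the spectrum of M_κ, then every μ ∈ ℂ with |μ − κ| = |λ − κ| also belongs to the spectrum of M_κ. In other words, the spectrum of M_κ is a union of circles centred at κ. -/

import Mathlib

/-- The spectrum of the antilinear/ℝ-linear operator `z ↦ κ z + M z̄` consists of
circles centred at `κ`: if `l` is an eigenvalue, so is any `μ` with `|μ - κ| = |l - κ|`. -/
theorem spectrum_union_of_circles {n : ℕ} (κ : ℂ) (M : Matrix (Fin n) (Fin n) ℂ)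
    (l μ : ℂ)
    (hl : ∃ z : Fin n → ℂ, z ≠ 0 ∧ κ • z + M.mulVec (star z) = l • z)
    (hμ : ‖μ - κ‖ = ‖l - κ‖) :
    ∃ z : Fin n → ℂ, z ≠ 0 ∧ κ • z + M.mulVec (star z) = μ • z := by
  obtain ⟨z, hz, heq⟩ := hl
  have hM : M.mulVec (star z) = (l - κ) • z := by
    rw [sub_smul]
    rw [eq_sub_iff_add_eq, add_comm]
    exact heq
  by_cases hlκ : l = κ
  · have hμκ : μ = κ := by
      have : ‖μ - κ‖ = 0 := by rw [hμ, hlκ, sub_self, norm_zero]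
      exact sub_eq_zero.mp (norm_eq_zero.mp this)
    exact ⟨z, hz, by rw [hμκ]; rw [hlκ] at heq; exact heq⟩
  · have hsub : l - κ ≠ 0 := sub_ne_zero.mpr hlκ
    have hμsub : μ - κ ≠ 0 := by
      intro h
      apply hsub
      have : ‖l - κ‖ = 0 := by rw [← hμ, h, norm_zero]
      exact norm_eq_zero.mp this
    set u : ℂ := (μ - κ) / (l - κ) with hu_def
    have hu0 : u ≠ 0 := div_ne_zero hμsub hsub
    have hubar : (starRingEnd ℂ) u ≠ 0 := by
      simpa only [ne_eq, map_eq_zero] using hu0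
    set c : ℂ := Complex.exp (Complex.log ((starRingEnd ℂ) u) / 2) with hc_def
    have hc0 : c ≠ 0 := Complex.exp_ne_zero _
    have hc2 : c ^ 2 = (starRingEnd ℂ) u := by
      rw [sq, hc_def, ← Complex.exp_add, add_halves]
      exact Complex.exp_log hubar
    have habsu : ‖u‖ = 1 := by
      rw [hu_def, norm_div, hμ, div_self (norm_ne_zero_iff.mpr hsub)]
    have habsc : ‖c‖ = 1 := by
      rw [hc_def, Complex.norm_exp]
      have : (Complex.log ((starRingEnd ℂ) u) / 2).re = Real.log ‖u‖ / 2 := by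
        simp [Complex.div_re, Complex.log_re]
      rw [this, habsu]
      simp
    have hconjc : (starRingEnd ℂ) c = c⁻¹ := by
      have := Complex.mul_conj c
      rw [Complex.normSq_eq_norm_sq, habsc, one_pow, Complex.ofReal_one] at this
      field_simp at this ⊢
      linear_combination this
    refine ⟨c • z, smul_ne_zero hc0 hz, ?_⟩
    have hstar : star (c • z) = (starRingEnd ℂ) c • star z := by
      ext i
      simp [Pi.smul_apply]
    rw [hstar, Matrix.mulVec_smul, hM, smul_comm, ← smul_assoc, ← smul_assoc, smul_eq_mul,
      smul_eq_mul]
    rw [smul_smul]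
    rw [← add_smul]
    congr 1
    -- κ * c + conj c * (l - κ) = μ * c
    have key : (μ - κ) * (c ^ 2) = l - κ := by
      rw [hc2, hu_def, map_div₀]
      have h1 : (μ - κ) * (starRingEnd ℂ) (μ - κ) = (‖μ - κ‖ : ℂ) ^ 2 := by
        rw [Complex.mul_conj, Complex.normSq_eq_norm_sq]; push_cast; ring
      have h2 : (l - κ) * (starRingEnd ℂ) (l - κ) = (‖l - κ‖ : ℂ) ^ 2 := by
        rw [Complex.mul_conj, Complex.normSq_eq_norm_sq]; push_cast; ring
      rw [hμ] at h1
      have hcls : (starRingEnd ℂ) (l - κ) ≠ 0 := by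
        simpa only [ne_eq, map_eq_zero] using hsub
      rw [mul_div_assoc', div_eq_iff hcls]
      linear_combination h1 - h2
    rw [hconjc]
    field_simp
    linear_combination -key
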